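/- Let $(\psi_k) \subseteq X_1^*$ be a $p$-Bessel sequence with $\psi_k \ne 0$ for all $k$, and let $(\phi_k) \subseteq X_2$ be a $p$-Riesz sequence. Then the map $m \mapsto \mathbf{M}_{m,(\phi_k),(\psi_k)}$ from $\ell^\infty$ into $\mathcal{B}(X_1, X_2)$ is injective. -/

import Mathlib

/-- If `(ψ k) ⊆ X₁*` is a `p`-Bessel sequence with no zero elements and `(φ k) ⊆ X₂` is a
`p`-Riesz sequence, then the map `m ↦ M_{m,(φ k),(ψ k)}` from `ℓ^∞` into `B(X₁, X₂)` is
injective. -/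
theorem multiplier_symbol_injective {X₁ X₂ : Type*}
    [NormedAddCommGroup X₁] [NormedSpace ℝ X₁] [CompleteSpace X₁]
    [TopologicalSpace.SeparableSpace X₁]
    [NormedAddCommGroup X₂] [NormedSpace ℝ X₂] [CompleteSpace X₂]
    [TopologicalSpace.SeparableSpace X₂]
    (hrefl₁ : Function.Surjective (NormedSpace.inclusionInDoubleDual ℝ X₁))
    (hrefl₂ : Function.Surjective (NormedSpace.inclusionInDoubleDual ℝ X₂))
    (p q B₁ A B : ℝ) (hp : 1 < p) (hpq : 1 / p + 1 / q = 1)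
    (hB₁ : 0 < B₁) (hA : 0 < A) (hB : 0 < B)
    (ψ : ℕ → StrongDual ℝ X₁) (φ : ℕ → X₂)
    (hbesselψ : ∀ f : X₁, ∃ s : ℝ,
      HasSum (fun k => |ψ k f| ^ p) s ∧ s ^ (1 / p) ≤ B₁ * ‖f‖)
    (hψne : ∀ k, ψ k ≠ 0)
    (hriesz : ∀ d : ℕ →₀ ℝ,
      A * (∑ k ∈ d.support, |d k| ^ p) ^ (1 / p) ≤ ‖∑ k ∈ d.support, d k • φ k‖ ∧
      ‖∑ k ∈ d.support, d k • φ k‖ ≤ B * (∑ k ∈ d.support, |d k| ^ p) ^ (1 / p))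
    (m m' : ℕ → ℝ)
    (hm : BddAbove (Set.range fun k => |m k|))
    (hm' : BddAbove (Set.range fun k => |m' k|))
    (M M' : X₁ →L[ℝ] X₂)
    (hM : ∀ f : X₁, HasSum (fun k => (m k * ψ k f) • φ k) (M f))
    (hM' : ∀ f : X₁, HasSum (fun k => (m' k * ψ k f) • φ k) (M' f)) :
    M = M' → m = m' := by
  intro hMM'
  funext k
  by_contra hne
  obtain ⟨f, hf⟩ : ∃ f, ψ k f ≠ 0 := by
    by_contra h
    push_neg at h
    exact hψne k (ContinuousLinearMap.ext h)
  set c : ℕ → ℝ := fun j => (m j - m' j) * ψ j f with hc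
  have hck : c k ≠ 0 := mul_ne_zero (sub_ne_zero.mpr hne) hf
  have hp0 : p ≠ 0 := by linarith
  have hsum : HasSum (fun j => c j • φ j) 0 := by
    have h2 := (hM f).sub (hM' f)
    rw [hMM', sub_self] at h2
    simpa [hc, sub_mul, sub_smul] using h2
  have hε : (0:ℝ) < A * |c k| := mul_pos hA (abs_pos.mpr hck)
  rw [HasSum] at hsum
  obtain ⟨F, hF1, hF2⟩ :=
    ((hsum.eventually (Metric.ball_mem_nhds 0 hε)).and
      (Filter.eventually_ge_atTop ({k} : Finset ℕ))).exists
  have hkF : k ∈ F := hF2 (Finset.mem_singleton_self k)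
  set d : ℕ →₀ ℝ := Finsupp.onFinset F (fun j => if j ∈ F then c j else 0)
    (fun a ha => by by_contra h; simp [h] at ha) with hd
  have hdsub : d.support ⊆ F := Finsupp.support_onFinset_subset
  have hdF : ∀ j ∈ F, d j = c j := fun j hj => by simp [hd, hj]
  have hsum_eq : ∑ j ∈ d.support, d j • φ j = ∑ j ∈ F, c j • φ j := by
    rw [Finset.sum_subset hdsub (fun x hx hnx => by
      rw [Finsupp.notMem_support_iff.mp hnx, zero_smul])]
    exact Finset.sum_congr rfl (fun j hj => by rw [hdF j hj])
  have hk' : k ∈ d.support := Finsupp.mem_support_iff.mpr (by rw [hdF k hkF]; exact hck)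
  have hle1 : |c k| ^ p ≤ ∑ j ∈ d.support, |d j| ^ p := by
    calc |c k| ^ p = |d k| ^ p := by rw [hdF k hkF]
      _ ≤ _ := Finset.single_le_sum (f := fun j => |d j| ^ p)
        (fun i _ => Real.rpow_nonneg (abs_nonneg _) p) hk' 
  have hle2 : |c k| ≤ (∑ j ∈ d.support, |d j| ^ p) ^ (1/p) := by
    calc |c k| = (|c k| ^ p) ^ (1/p) := by
          rw [← Real.rpow_mul (abs_nonneg _), mul_one_div, div_self hp0, Real.rpow_one]
      _ ≤ _ := Real.rpow_le_rpow (Real.rpow_nonneg (abs_nonneg _) _) hle1 (by positivity)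
  have hge : A * |c k| ≤ ‖∑ j ∈ F, c j • φ j‖ := by
    rw [← hsum_eq]
    exact le_trans (mul_le_mul_of_nonneg_left hle2 hA.le) (hriesz d).1
  have hlt : ‖∑ j ∈ F, c j • φ j‖ < A * |c k| := by
    simpa [dist_eq_norm] using hF1
  linarith
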